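/- arXiv:1112.6189 — 3 statements merged into one kernel-verified Lean document; each statement's English description precedes it below -/
import Mathlib

section
/- Let m, n ≥ 0. Then Q^{(n)}·P^{(m)} = Σ_{k=0}^{min(m,n)} [k+1]·P^{(m−k)}·Q^{(n−k)} in A. (This is the case i = j of the commutation relations of Lemma 1 for the quantum Heisenberg algebra.) -/
/-- The quantum integer `[n] = (q^n - q^{-n})/(q - q^{-1})` in `K = ℚ(q)`,
where `q` is the variable `RatFunc.X`. -/
noncomputable def qint (n : ℤ) : RatFunc ℚ :=
  (RatFunc.X ^ n - RatFunc.X ^ (-n)) / (RatFunc.X - RatFunc.X⁻¹)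

abbrev K := RatFunc ℚ

lemma hX : (RatFunc.X : K) ≠ 0 := RatFunc.X_ne_zero

lemma Xpow_ne_one (k : ℤ) (hk : k ≠ 0) : (RatFunc.X : K) ^ k ≠ 1 := by
  have base : ∀ j : ℕ, j ≠ 0 → (RatFunc.X : K) ^ (j:ℕ) ≠ 1 := by
    intro j hj h
    have : (algebraMap (Polynomial ℚ) K) (Polynomial.X ^ j) = algebraMap (Polynomial ℚ) K 1 := by
      simpa [map_pow, RatFunc.algebraMap_X] using h
    have := (RatFunc.algebraMap_injective ℚ) this
    have hdeg := congrArg Polynomial.natDegree this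
    simp [Polynomial.natDegree_X_pow] at hdeg
    exact hj hdeg
  rcases lt_trichotomy k 0 with h | h | h
  · intro hc
    have : (RatFunc.X : K) ^ (-k) = 1 := by
      rw [zpow_neg]; rw [hc]; simp
    rw [show (-k) = ((-k).toNat : ℤ) by omega, zpow_natCast] at this
    exact base _ (by omega) this
  · exact absurd h hk
  · intro hc
    rw [show k = (k.toNat : ℤ) by omega, zpow_natCast] at hc
    exact base _ (by omega) hc

lemma dne : (RatFunc.X : K) - RatFunc.X⁻¹ ≠ 0 := by
  intro h
  have hx : (RatFunc.X : K) = RatFunc.X⁻¹ := sub_eq_zero.mp h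
  have : (RatFunc.X : K) ^ (2:ℤ) = 1 := by
    have := congrArg (fun t => (RatFunc.X : K) * t) hx
    simp [mul_inv_cancel₀ hX] at this
    rw [show (2:ℤ) = (2:ℕ) by norm_num, zpow_natCast, pow_two]; exact this
  exact Xpow_ne_one 2 (by norm_num) this

example : True := trivial

lemma qint_zero : qint 0 = 0 := by simp [qint]

lemma qint_one : qint 1 = 1 := by
  simp only [qint, zpow_one, zpow_neg, zpow_one]
  exact div_self dne

lemma qint_neg (k : ℤ) : qint (-k) = - qint k := by
  simp only [qint, neg_neg]
  rw [← neg_div]; ring_nf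

lemma qint_ne_zero (k : ℤ) (hk : k ≠ 0) : qint k ≠ 0 := by
  apply div_ne_zero _ dne
  intro h
  have hx : (RatFunc.X : K) ^ k = RatFunc.X ^ (-k) := sub_eq_zero.mp h
  have : (RatFunc.X : K) ^ (2*k) = 1 := by
    rw [two_mul, zpow_add₀ hX]
    nth_rewrite 2 [hx]
    rw [zpow_neg, mul_inv_cancel₀ (zpow_ne_zero _ hX)]
  exact Xpow_ne_one (2*k) (by omega) this

lemma qint_mul_pair (a r : ℤ) :
    qint a * (RatFunc.X ^ r + RatFunc.X ^ (-r)) = qint (a + r) + qint (a - r) := by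
  simp only [qint]
  rw [← add_div, div_mul_eq_mul_div]
  congr 1
  simp only [neg_add, neg_sub, sub_eq_add_neg, zpow_add₀ hX]
  ring

lemma qint_two_mul (r : ℤ) :
    qint (2 * r) = qint r * (RatFunc.X ^ r + RatFunc.X ^ (-r)) := by
  simp only [qint]
  rw [div_mul_eq_mul_div]
  congr 1
  have : (2:ℤ) * r = r + r := two_mul r
  simp only [this, neg_add, zpow_add₀ hX]
  ring

lemma key_sum (j : ℕ) :
    ∑ r ∈ Finset.Icc 1 j, qint ((j:ℤ) - r + 1) * (qint (2 * (r:ℤ)) / qint r) =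
      (j : K) * qint ((j:ℤ) + 1) := by
  have step : ∀ r ∈ Finset.Icc 1 j,
      qint ((j:ℤ) - r + 1) * (qint (2 * (r:ℤ)) / qint r) =
        qint ((j:ℤ) + 1) + qint ((j:ℤ) + 1 - 2 * r) := by
    intro r hr
    rw [Finset.mem_Icc] at hr
    have hr0 : (r:ℤ) ≠ 0 := by omega
    rw [qint_two_mul, mul_comm (qint (r:ℤ)), mul_div_assoc,
      div_self (qint_ne_zero _ hr0), mul_one, qint_mul_pair]
    congr 2 <;> ring
  rw [Finset.sum_congr rfl step, Finset.sum_add_distrib]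
  have h1 : ∑ _r ∈ Finset.Icc 1 j, qint ((j:ℤ) + 1) = (j:K) * qint ((j:ℤ)+1) := by
    rw [Finset.sum_const, Nat.card_Icc]
    simp [nsmul_eq_mul]
  have h2 : ∑ r ∈ Finset.Icc 1 j, qint ((j:ℤ) + 1 - 2 * r) = 0 := by
    apply Finset.sum_involution (g := fun r _ => j + 1 - r)
    · intro r hr
      rw [Finset.mem_Icc] at hr
      have : ((j + 1 - r : ℕ) : ℤ) = (j:ℤ) + 1 - r := by omega
      rw [this]
      have : (j:ℤ) + 1 - 2 * ((j:ℤ) + 1 - r) = -((j:ℤ) + 1 - 2*r) := by ring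
      rw [this, qint_neg, add_neg_cancel]
    · intro r hr hne heq
      rw [Finset.mem_Icc] at hr
      have : (j:ℤ) + 1 - 2*r = 0 := by omega
      rw [this, qint_zero] at hne
      exact hne rfl
    · intro r hr
      rw [Finset.mem_Icc] at hr ⊢
      omega
    · intro r hr
      rw [Finset.mem_Icc] at hr
      omega
  rw [h1, h2, add_zero]

instance : CharZero K :=
  charZero_of_injective_algebraMap (algebraMap ℚ K).injective

lemma smul_cancel {A : Type*} [AddCommMonoid A] [Module K A] {c : K} (hc : c ≠ 0)
    {x y : A} (h : c • x = c • y) : x = y := by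
  have := congrArg (fun z => c⁻¹ • z) h
  simpa [smul_smul, inv_mul_cancel₀ hc] using this

lemma trunc {A : Type*} [Ring A] [Algebra (RatFunc ℚ) A] (c : ℕ → A) (R : ℤ → A)
    (hR0 : R 0 = 1) (hRneg : ∀ k : ℤ, k < 0 → R k = 0)
    (hRrec : ∀ n : ℕ, 1 ≤ n →
      (n : RatFunc ℚ) • R n =
        ∑ s ∈ Finset.Icc 1 n, ((s : RatFunc ℚ) / qint s) • (c s * R ((n : ℤ) - s)))
    (n : ℕ) (t : ℤ) (ht : t ≤ n) :
    ∑ s ∈ Finset.Icc 1 n, ((s : RatFunc ℚ) / qint s) • (c s * R (t - s)) = (t : K) • R t := by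
  rcases le_or_gt t 0 with h | h
  · rw [Finset.sum_eq_zero]
    · rcases h.lt_or_eq with h' | h'
      · rw [hRneg t h', smul_zero]
      · subst h'; simp
    · intro s hs
      rw [Finset.mem_Icc] at hs
      rw [hRneg (t - s) (by omega), mul_zero, smul_zero]
  · have htu : t = ((t.toNat : ℕ) : ℤ) := by omega
    have hu1 : 1 ≤ t.toNat := by omega
    have hsub : ∑ s ∈ Finset.Icc 1 t.toNat, ((s : RatFunc ℚ) / qint s) • (c s * R (t - s)) =
        ∑ s ∈ Finset.Icc 1 n, ((s : RatFunc ℚ) / qint s) • (c s * R (t - s)) := by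
      apply Finset.sum_subset (Finset.Icc_subset_Icc_right (by omega))
      intro s hs hs2
      rw [Finset.mem_Icc] at hs hs2
      rw [hRneg (t - s) (by omega), mul_zero, smul_zero]
    rw [← hsub, htu]
    simp only [Int.toNat_natCast]
    have hc : (((t.toNat : ℤ)) : K) = ((t.toNat : ℕ) : K) := by push_cast; ring
    rw [hc, hRrec t.toNat hu1]

lemma sc1 (r : ℕ) (hr : 1 ≤ r) :
    ((r:K)/qint r) * (qint (2*(r:ℤ)) * qint r / (r:K)) = qint (2*(r:ℤ)) := by
  have h1 : qint (r:ℤ) ≠ 0 := qint_ne_zero _ (by omega)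
  have h2 : (r:K) ≠ 0 := Nat.cast_ne_zero.mpr (by omega)
  field_simp

lemma sc3 (r : ℕ) (hr : 1 ≤ r) (x : K) :
    qint (2*(r:ℤ))/(r:K) * (x - (r:K)) + qint (2*(r:ℤ)) = x * (qint (2*(r:ℤ))/(r:K)) := by
  have h2 : (r:K) ≠ 0 := Nat.cast_ne_zero.mpr (by omega)
  field_simp
  ring

lemma L1 {A : Type*} [Ring A] [Algebra (RatFunc ℚ) A]
    (b a : ℕ → A) (P : ℤ → A)
    (hP0 : P 0 = 1) (hPneg : ∀ k : ℤ, k < 0 → P k = 0)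
    (hPrec : ∀ n : ℕ, 1 ≤ n →
      (n : RatFunc ℚ) • P n =
        ∑ s ∈ Finset.Icc 1 n, ((s : RatFunc ℚ) / qint s) • (b s * P ((n : ℤ) - s)))
    (hcomm : ∀ m m' : ℕ, 1 ≤ m → 1 ≤ m' →
      a m * b m' - b m' * a m =
        if m = m' then (qint (2 * m) * qint m / (m : RatFunc ℚ)) • (1 : A) else 0)
    (r : ℕ) (hr : 1 ≤ r) :
    ∀ m : ℤ, a r * P m = P m * a r + (qint (2 * (r:ℤ)) / (r : K)) • P (m - r) := by
  have hnat : ∀ M : ℕ, a r * P M = P M * a r + (qint (2 * (r:ℤ)) / (r : K)) • P ((M:ℤ) - r) := by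
    intro M
    induction M using Nat.strong_induction_on with
    | _ M ih =>
      rcases Nat.eq_zero_or_pos M with h0 | hM
      · subst h0
        simp only [Nat.cast_zero]
        rw [hP0, hPneg (0 - (r:ℤ)) (by omega), smul_zero, add_zero, one_mul, mul_one]
      · have hMK : ((M:ℕ):K) ≠ 0 := Nat.cast_ne_zero.mpr (by omega)
        apply smul_cancel hMK
        have key : ∀ s ∈ Finset.Icc 1 M,
            ((s:K)/qint s) • (a r * (b s * P ((M:ℤ) - s))) =
              ((s:K)/qint s) • (b s * (P ((M:ℤ)-s) * a r))
              + (qint (2*(r:ℤ))/(r:K)) • (((s:K)/qint s) • (b s * P ((M:ℤ)-(r:ℤ)-s)))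
              + (if r = s then qint (2*(r:ℤ)) • P ((M:ℤ)-r) else 0) := by
          intro s hs
          rw [Finset.mem_Icc] at hs
          have hab : a r * b s =
              (if r = s then (qint (2 * r) * qint r / (r : K)) • (1 : A) else 0) + b s * a r :=
            eq_add_of_sub_eq (hcomm r s hr hs.1)
          have hihs : a r * P ((M:ℤ) - s) =
              P ((M:ℤ)-s) * a r + (qint (2*(r:ℤ))/(r:K)) • P ((M:ℤ)-s-(r:ℤ)) := by
            have hc : (M:ℤ) - s = ((M - s : ℕ) : ℤ) := by omega
            rw [hc]
            exact ih (M - s) (by omega)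
          have expand : a r * (b s * P ((M:ℤ)-s)) =
              b s * (P ((M:ℤ)-s) * a r)
              + (qint (2*(r:ℤ))/(r:K)) • (b s * P ((M:ℤ)-s-(r:ℤ)))
              + (if r = s then (qint (2 * r) * qint r / (r : K)) • P ((M:ℤ)-s) else 0) := by
            calc a r * (b s * P ((M:ℤ)-s)) = (a r * b s) * P ((M:ℤ)-s) := (mul_assoc _ _ _).symm
              _ = (if r = s then (qint (2 * r) * qint r / (r : K)) • (1 : A) else 0) * P ((M:ℤ)-s)
                    + b s * (a r * P ((M:ℤ)-s)) := by rw [hab, add_mul, mul_assoc]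
              _ = (if r = s then (qint (2 * r) * qint r / (r : K)) • P ((M:ℤ)-s) else 0)
                    + b s * (P ((M:ℤ)-s) * a r + (qint (2*(r:ℤ))/(r:K)) • P ((M:ℤ)-s-(r:ℤ))) := by
                  rw [hihs, ite_mul, zero_mul, smul_mul_assoc, one_mul]
              _ = _ := by
                  rw [mul_add, mul_smul_comm]; abel
          rw [expand, smul_add, smul_add]
          congr 1
          · congr 1
            rw [smul_comm, sub_right_comm]
          · split_ifs with h
            · subst h
              rw [smul_smul, sc1 r hr]
            · rw [smul_zero]
        calc (M:K) • (a r * P (M:ℤ))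
            = a r * ((M:K) • P (M:ℤ)) := (mul_smul_comm _ _ _).symm
          _ = a r * ∑ s ∈ Finset.Icc 1 M, ((s:K)/qint s) • (b s * P ((M:ℤ)-s)) := by
              rw [hPrec M hM]
          _ = ∑ s ∈ Finset.Icc 1 M, ((s:K)/qint s) • (a r * (b s * P ((M:ℤ)-s))) := by
              rw [Finset.mul_sum]
              exact Finset.sum_congr rfl fun s _ => mul_smul_comm _ _ _
          _ = (∑ s ∈ Finset.Icc 1 M, ((s:K)/qint s) • (b s * (P ((M:ℤ)-s) * a r)))
              + (∑ s ∈ Finset.Icc 1 M,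
                  (qint (2*(r:ℤ))/(r:K)) • (((s:K)/qint s) • (b s * P ((M:ℤ)-(r:ℤ)-s))))
              + (∑ s ∈ Finset.Icc 1 M, if r = s then qint (2*(r:ℤ)) • P ((M:ℤ)-r) else 0) := by
              rw [Finset.sum_congr rfl key, Finset.sum_add_distrib, Finset.sum_add_distrib]
          _ = ((M:K) • P (M:ℤ)) * a r
              + (qint (2*(r:ℤ))/(r:K)) • ((((M:ℤ)-(r:ℤ) : ℤ):K) • P ((M:ℤ)-r))
              + qint (2*(r:ℤ)) • P ((M:ℤ)-r) := by
              congr 1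
              · congr 1
                · rw [hPrec M hM, Finset.sum_mul]
                  exact Finset.sum_congr rfl fun s _ => by
                    rw [smul_mul_assoc, mul_assoc]
                · rw [← Finset.smul_sum,
                    trunc b P hP0 hPneg hPrec M ((M:ℤ)-(r:ℤ)) (by omega)]
              · rw [Finset.sum_ite_eq]
                split_ifs with h
                · rfl
                · rw [Finset.mem_Icc, not_and_or] at h
                  rw [hPneg ((M:ℤ)-r) (by omega), smul_zero]
          _ = (M:K) • (P (M:ℤ) * a r + (qint (2*(r:ℤ))/(r:K)) • P ((M:ℤ)-r)) := by
              rw [smul_add, smul_mul_assoc, smul_smul, smul_smul, add_assoc, ← add_smul]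
              congr 2
              push_cast
              rw [sc3 r hr]
  intro m
  rcases le_or_gt 0 m with h | h
  · obtain ⟨M, rfl⟩ : ∃ M : ℕ, m = (M:ℤ) := ⟨m.toNat, by omega⟩
    exact hnat M
  · rw [hPneg m h, hPneg (m - r) (by omega), zero_mul, mul_zero, smul_zero, add_zero]

/-- Lemma 1 (case `i = j`): `Q^{(n)} P^{(m)} = ∑_{k=0}^{min(m,n)} [k+1] P^{(m-k)} Q^{(n-k)}`. -/
theorem heisenberg_QP_same_node
    {A : Type*} [Ring A] [Algebra (RatFunc ℚ) A]
    (b a : ℕ → A)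
    (hb : ∀ m m' : ℕ, Commute (b m) (b m'))
    (ha : ∀ m m' : ℕ, Commute (a m) (a m'))
    (P Q : ℤ → A)
    (hP0 : P 0 = 1)
    (hPneg : ∀ k : ℤ, k < 0 → P k = 0)
    (hPrec : ∀ n : ℕ, 1 ≤ n →
      (n : RatFunc ℚ) • P n =
        ∑ m ∈ Finset.Icc 1 n, ((m : RatFunc ℚ) / qint m) • (b m * P ((n : ℤ) - m)))
    (hQ0 : Q 0 = 1)
    (hQneg : ∀ k : ℤ, k < 0 → Q k = 0)
    (hQrec : ∀ n : ℕ, 1 ≤ n →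
      (n : RatFunc ℚ) • Q n =
        ∑ m ∈ Finset.Icc 1 n, ((m : RatFunc ℚ) / qint m) • (a m * Q ((n : ℤ) - m)))
    (hcomm : ∀ m m' : ℕ, 1 ≤ m → 1 ≤ m' →
      a m * b m' - b m' * a m =
        if m = m' then (qint (2 * m) * qint m / (m : RatFunc ℚ)) • (1 : A) else 0)
    (m n : ℕ) :
    Q n * P m =
      ∑ k ∈ Finset.range (min m n + 1),
        qint ((k : ℤ) + 1) • (P ((m : ℤ) - k) * Q ((n : ℤ) - k)) := by
    induction n using Nat.strong_induction_on with
  | _ n ih =>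
  have ext_range : ∀ (n' N' : ℕ), min m n' ≤ N' →
      ∑ k ∈ Finset.range (N' + 1), qint ((k:ℤ)+1) • (P ((m:ℤ)-k) * Q ((n':ℤ)-k)) =
      ∑ k ∈ Finset.range (min m n' + 1), qint ((k:ℤ)+1) • (P ((m:ℤ)-k) * Q ((n':ℤ)-k)) := by
    intro n' N' h
    refine (Finset.sum_subset (by rw [Finset.range_subset_range]; omega) ?_).symm
    intro k hk hk2
    rw [Finset.mem_range] at hk hk2
    rcases le_or_gt k m with h1 | h1
    · rw [hQneg ((n':ℤ)-k) (by omega), mul_zero, smul_zero]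
    · rw [hPneg ((m:ℤ)-k) (by omega), zero_mul, smul_zero]
  rcases Nat.eq_zero_or_pos n with rfl | hn
  · simp [hQ0, qint_one]
  · have hnK : (n:K) ≠ 0 := Nat.cast_ne_zero.mpr (by omega)
    apply smul_cancel hnK
    have L1a := L1 b a P hP0 hPneg hPrec hcomm
    have e1 : (n:K) • (Q (n:ℤ) * P (m:ℤ)) =
        ∑ r ∈ Finset.Icc 1 n, ((r:K)/qint r) • (a r * (Q ((n:ℤ)-r) * P (m:ℤ))) := by
      rw [← smul_mul_assoc, hQrec n hn, Finset.sum_mul]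
      exact Finset.sum_congr rfl fun r _ => by rw [smul_mul_assoc, mul_assoc]
    have e2 : ∀ r ∈ Finset.Icc 1 n, Q ((n:ℤ)-r) * P (m:ℤ) =
        ∑ k ∈ Finset.range (m + n + 1),
          qint ((k:ℤ)+1) • (P ((m:ℤ)-k) * Q ((n:ℤ)-(r:ℤ)-k)) := by
      intro r hr
      rw [Finset.mem_Icc] at hr
      have hc : (n:ℤ) - r = ((n - r : ℕ) : ℤ) := by omega
      rw [hc, ih (n - r) (by omega), ← ext_range (n - r) (m + n) (by omega)]
    have e3 : ∀ r ∈ Finset.Icc 1 n, ∀ k ∈ Finset.range (m+n+1),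
        (((r:K)/qint r) * qint ((k:ℤ)+1)) • (a r * (P ((m:ℤ)-k) * Q ((n:ℤ)-(r:ℤ)-k))) =
          (((r:K)/qint r) * qint ((k:ℤ)+1)) • (P ((m:ℤ)-k) * (a r * Q ((n:ℤ)-(k:ℤ)-r)))
          + (qint ((k:ℤ)+1) * (qint (2*(r:ℤ))/qint r)) •
              (P ((m:ℤ)-((k+r:ℕ):ℤ)) * Q ((n:ℤ)-((k+r:ℕ):ℤ))) := by
      intro r hr k _
      rw [Finset.mem_Icc] at hr
      have hL := L1a r hr.1 ((m:ℤ)-k)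
      calc (((r:K)/qint r) * qint ((k:ℤ)+1)) • (a r * (P ((m:ℤ)-k) * Q ((n:ℤ)-(r:ℤ)-k)))
          = (((r:K)/qint r) * qint ((k:ℤ)+1)) •
              ((P ((m:ℤ)-k) * a r + (qint (2*(r:ℤ))/(r:K)) • P ((m:ℤ)-(k:ℤ)-(r:ℤ)))
                * Q ((n:ℤ)-(r:ℤ)-k)) := by
            rw [← mul_assoc, ← hL]
        _ = (((r:K)/qint r) * qint ((k:ℤ)+1)) • (P ((m:ℤ)-k) * (a r * Q ((n:ℤ)-(r:ℤ)-k)))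
            + ((((r:K)/qint r) * qint ((k:ℤ)+1)) * (qint (2*(r:ℤ))/(r:K))) •
                (P ((m:ℤ)-(k:ℤ)-(r:ℤ)) * Q ((n:ℤ)-(r:ℤ)-k)) := by
            rw [add_mul, smul_mul_assoc, mul_assoc, smul_add, smul_smul]
        _ = _ := by
            have hsc : (((r:K)/qint r) * qint ((k:ℤ)+1)) * (qint (2*(r:ℤ))/(r:K))
                = qint ((k:ℤ)+1) * (qint (2*(r:ℤ))/qint r) := by
              have h1 : qint (r:ℤ) ≠ 0 := qint_ne_zero _ (by omega)
              have h2 : (r:K) ≠ 0 := Nat.cast_ne_zero.mpr (by omega)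
              field_simp
            have harg2 : (m:ℤ)-(k:ℤ)-(r:ℤ) = (m:ℤ)-((k+r:ℕ):ℤ) := by push_cast; ring
            have harg1 : (n:ℤ)-(r:ℤ)-(k:ℤ) = (n:ℤ)-(k:ℤ)-(r:ℤ) := by ring
            rw [hsc, harg2, harg1]
            congr 2
            push_cast
            ring
    have e4 : (n:K) • (Q (n:ℤ) * P (m:ℤ)) =
        (∑ r ∈ Finset.Icc 1 n, ∑ k ∈ Finset.range (m+n+1),
          (((r:K)/qint r) * qint ((k:ℤ)+1)) • (P ((m:ℤ)-k) * (a r * Q ((n:ℤ)-(k:ℤ)-r))))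
        + (∑ r ∈ Finset.Icc 1 n, ∑ k ∈ Finset.range (m+n+1),
          (qint ((k:ℤ)+1) * (qint (2*(r:ℤ))/qint r)) •
              (P ((m:ℤ)-((k+r:ℕ):ℤ)) * Q ((n:ℤ)-((k+r:ℕ):ℤ)))) := by
      rw [e1, ← Finset.sum_add_distrib]
      refine Finset.sum_congr rfl fun r hr => ?_
      rw [e2 r hr, Finset.mul_sum, Finset.smul_sum, ← Finset.sum_add_distrib]
      refine Finset.sum_congr rfl fun k hk => ?_
      rw [mul_smul_comm, smul_smul]
      exact e3 r hr k hk
    have eSA : ∑ r ∈ Finset.Icc 1 n, ∑ k ∈ Finset.range (m+n+1),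
          (((r:K)/qint r) * qint ((k:ℤ)+1)) • (P ((m:ℤ)-k) * (a r * Q ((n:ℤ)-(k:ℤ)-r)))
        = ∑ k ∈ Finset.range (m+n+1),
            (qint ((k:ℤ)+1) * ((((n:ℤ)-(k:ℤ)) : ℤ):K) ) • (P ((m:ℤ)-k) * Q ((n:ℤ)-k)) := by
      rw [Finset.sum_comm]
      refine Finset.sum_congr rfl fun k _ => ?_
      have hterm : ∀ r ∈ Finset.Icc 1 n,
          (((r:K)/qint r) * qint ((k:ℤ)+1)) • (P ((m:ℤ)-k) * (a r * Q ((n:ℤ)-(k:ℤ)-r)))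
            = qint ((k:ℤ)+1) • (P ((m:ℤ)-k) * (((r:K)/qint r) • (a r * Q (((n:ℤ)-(k:ℤ))-r)))) := by
        intro r _
        rw [mul_smul_comm, smul_smul, mul_comm]
      rw [Finset.sum_congr rfl hterm, ← Finset.smul_sum, ← Finset.mul_sum,
        trunc a Q hQ0 hQneg hQrec n ((n:ℤ)-(k:ℤ)) (by omega),
        mul_smul_comm, smul_smul]
    have eSB : ∑ r ∈ Finset.Icc 1 n, ∑ k ∈ Finset.range (m+n+1),
          (qint ((k:ℤ)+1) * (qint (2*(r:ℤ))/qint r)) •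
            (P ((m:ℤ)-((k+r:ℕ):ℤ)) * Q ((n:ℤ)-((k+r:ℕ):ℤ)))
        = ∑ j ∈ Finset.range (m+n+1),
            ((j:K) * qint ((j:ℤ)+1)) • (P ((m:ℤ)-j) * Q ((n:ℤ)-j)) := by
      have step1 : ∀ r ∈ Finset.Icc 1 n,
          ∑ k ∈ Finset.range (m+n+1),
            (qint ((k:ℤ)+1) * (qint (2*(r:ℤ))/qint r)) •
              (P ((m:ℤ)-((k+r:ℕ):ℤ)) * Q ((n:ℤ)-((k+r:ℕ):ℤ)))
          = ∑ j ∈ Finset.Ico r (m+n+1),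
              (qint ((j:ℤ)-(r:ℤ)+1) * (qint (2*(r:ℤ))/qint r)) •
                (P ((m:ℤ)-j) * Q ((n:ℤ)-j)) := by
        intro r hr
        rw [Finset.mem_Icc] at hr
        rw [Finset.sum_Ico_eq_sum_range]
        have hshrink : ∑ k ∈ Finset.range (m+n+1-r),
              (qint ((k:ℤ)+1) * (qint (2*(r:ℤ))/qint r)) •
                (P ((m:ℤ)-((k+r:ℕ):ℤ)) * Q ((n:ℤ)-((k+r:ℕ):ℤ)))
            = ∑ k ∈ Finset.range (m+n+1),
              (qint ((k:ℤ)+1) * (qint (2*(r:ℤ))/qint r)) •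
                (P ((m:ℤ)-((k+r:ℕ):ℤ)) * Q ((n:ℤ)-((k+r:ℕ):ℤ))) := by
          apply Finset.sum_subset (by rw [Finset.range_subset_range]; omega)
          intro k hk hk2
          rw [Finset.mem_range] at hk hk2
          rw [hQneg ((n:ℤ)-((k+r:ℕ):ℤ)) (by push_cast; omega), mul_zero, smul_zero]
        rw [← hshrink]
        refine Finset.sum_congr rfl fun k _ => ?_
        have h1 : ((r + k : ℕ):ℤ) - (r:ℤ) + 1 = (k:ℤ) + 1 := by push_cast; ring
        have h2 : ((k + r : ℕ):ℤ) = ((r + k : ℕ):ℤ) := by push_cast; ring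
        rw [h1, h2]
      rw [Finset.sum_congr rfl step1]
      rw [Finset.sum_comm'
        (s' := fun j => Finset.Icc 1 (min j n)) (t' := Finset.range (m+n+1))
        (by
          intro r j
          simp only [Finset.mem_Icc, Finset.mem_Ico, Finset.mem_range]
          omega)]
      refine Finset.sum_congr rfl fun j _ => ?_
      rcases le_or_gt j n with hj | hj
      · rw [← Finset.sum_smul, min_eq_left hj, key_sum j]
      · rw [hQneg ((n:ℤ)-j) (by omega), mul_zero, smul_zero, Finset.sum_eq_zero]
        intro r _
        rw [smul_zero]
    rw [e4, eSA, eSB, ← Finset.sum_add_distrib, ← ext_range n (m+n) (by omega),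
      Finset.smul_sum]
    refine Finset.sum_congr rfl fun k _ => ?_
    rw [← add_smul, smul_smul]
    congr 1
    push_cast
    ring
end

section
/- Let m, n ≥ 0. Then Q^{(1^m)}·P^{(n)} = Σ_{k=0}^{min(m,n)} P^{(n−k)}·Q^{(1^{m−k})} in A. (This is the case ⟨i,j⟩ = −1 of the additional mixed relations stated after Lemma 1, for two adjacent nodes of the Dynkin diagram.) -/
lemma ratX_pow_ne_one (k : ℕ) (hk : 1 ≤ k) : (RatFunc.X : RatFunc ℚ) ^ k ≠ 1 := by
  intro h
  have h2 : algebraMap (Polynomial ℚ) (RatFunc ℚ) (Polynomial.X ^ k) =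
      algebraMap (Polynomial ℚ) (RatFunc ℚ) 1 := by
    simpa [RatFunc.algebraMap_X] using h
  have h3 : (Polynomial.X : Polynomial ℚ) ^ k = 1 := RatFunc.algebraMap_injective ℚ h2
  have := congrArg Polynomial.natDegree h3
  simp [Polynomial.natDegree_X_pow] at this
  omega

lemma qint_ne_zero_s3 (m : ℕ) (hm : 1 ≤ m) : qint m ≠ 0 := by
  have hX : (RatFunc.X : RatFunc ℚ) ≠ 0 := RatFunc.X_ne_zero
  unfold qint
  apply div_ne_zero
  · intro h
    have h1 : (RatFunc.X : RatFunc ℚ) ^ (m:ℤ) = RatFunc.X ^ (-(m:ℤ)) := sub_eq_zero.mp h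
    have h2 : (RatFunc.X : RatFunc ℚ) ^ (2*m) = 1 := by
      have := congrArg (· * (RatFunc.X : RatFunc ℚ) ^ (m:ℤ)) h1
      simp only [← zpow_add₀ hX] at this
      simpa [two_mul, ← zpow_natCast, ← zpow_add₀ hX] using this
    exact ratX_pow_ne_one (2*m) (by omega) h2
  · intro h
    have h1 : (RatFunc.X : RatFunc ℚ) = RatFunc.X⁻¹ := sub_eq_zero.mp h
    have h2 : (RatFunc.X : RatFunc ℚ) ^ 2 = 1 := by
      rw [sq]
      nth_rewrite 2 [h1]
      exact mul_inv_cancel₀ hX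
    exact ratX_pow_ne_one 2 (by omega) h2

instance : CharZero (RatFunc ℚ) :=
  charZero_of_injective_algebraMap (RatFunc.algebraMap_injective ℚ)

lemma smul_cancelK {A : Type*} [AddCommMonoid A] [Module (RatFunc ℚ) A] {c : RatFunc ℚ}
    (hc : c ≠ 0) {x y : A} (h : c • x = c • y) : x = y := by
  have h2 := congrArg (fun z => c⁻¹ • z) h
  simpa [inv_smul_smul₀ hc] using h2

lemma sum_shift_reindex {A : Type*} [AddCommMonoid A] (f : ℕ → A) (m n : ℕ)
    (hfn : ∀ j, n < j → f j = 0) (hfm : ∀ j, m < j → f j = 0) :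
    ∑ r ∈ Finset.Icc 1 m, ∑ k ∈ Finset.range (n+1), f (k+r)
      = ∑ j ∈ Finset.range (n+1), j • f j := by
  have step1 : ∀ r, 1 ≤ r →
      ∑ k ∈ Finset.range (n+1), f (k+r)
        = ∑ j ∈ Finset.range (n+1), if r ≤ j then f j else 0 := by
    intro r hr
    have hsub : Finset.range (n+1-r) ⊆ Finset.range (n+1) :=
      Finset.range_subset_range.mpr (by omega)
    have h1 : ∑ k ∈ Finset.range (n+1), f (k+r) = ∑ k ∈ Finset.range (n+1-r), f (k+r) := by
      refine (Finset.sum_subset hsub ?_).symm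
      intro k hk hnk
      rw [Finset.mem_range] at hk hnk
      exact hfn _ (by omega)
    have h2 : ∑ j ∈ Finset.range (n+1), (if r ≤ j then f j else 0)
        = ∑ j ∈ Finset.Icc r n, f j := by
      rw [← Finset.sum_filter]
      apply Finset.sum_congr _ (fun _ _ => rfl)
      ext j
      simp only [Finset.mem_filter, Finset.mem_range, Finset.mem_Icc]
      omega
    rw [h1, h2]
    refine Finset.sum_nbij' (fun k => k + r) (fun j => j - r) ?_ ?_ ?_ ?_ ?_
    · intro k hk; simp only [Finset.mem_range] at hk; simp only [Finset.mem_Icc]; omega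
    · intro j hj; simp only [Finset.mem_Icc] at hj; simp only [Finset.mem_range]; omega
    · intro k hk; omega
    · intro j hj; simp only [Finset.mem_Icc] at hj; omega
    · intro k _; rfl
  rw [Finset.sum_congr rfl (fun r hr => step1 r (Finset.mem_Icc.mp hr).1), Finset.sum_comm]
  apply Finset.sum_congr rfl
  intro j hj
  rw [← Finset.sum_filter]
  have hfil : (Finset.Icc 1 m).filter (fun r => r ≤ j) = Finset.Icc 1 (min m j) := by
    ext r
    simp only [Finset.mem_filter, Finset.mem_Icc]
    omega
  rw [hfil, Finset.sum_const, Nat.card_Icc]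
  rcases le_or_gt j m with h | h
  · congr 1
    omega
  · rw [hfm j h, smul_zero, smul_zero]

lemma aP_comm {A : Type*} [Ring A] [Algebra (RatFunc ℚ) A]
    (b a : ℕ → A) (P : ℤ → A)
    (hP0 : P 0 = 1)
    (hPneg : ∀ k : ℤ, k < 0 → P k = 0)
    (hPrec : ∀ n : ℕ, 1 ≤ n →
      (n : RatFunc ℚ) • P n =
        ∑ m ∈ Finset.Icc 1 n, ((m : RatFunc ℚ) / qint m) • (b m * P ((n : ℤ) - m)))
    (hcomm : ∀ m m' : ℕ, 1 ≤ m → 1 ≤ m' →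
      a m * b m' - b m' * a m =
        if m = m' then
          (((-1 : RatFunc ℚ) ^ (m + 1) * qint m ^ 2 / (m : RatFunc ℚ)) • (1 : A))
        else 0)
    (r : ℕ) (hr : 1 ≤ r) :
    ∀ n : ℕ, a r * P n = P n * a r
      + (((-1 : RatFunc ℚ) ^ (r + 1) * qint r / (r : RatFunc ℚ))) • P ((n : ℤ) - r) := by
  set c : RatFunc ℚ := (-1 : RatFunc ℚ) ^ (r + 1) * qint r / (r : RatFunc ℚ) with hcdef
  intro n
  induction n using Nat.strong_induction_on with
  | _ n IH =>
  rcases Nat.eq_zero_or_pos n with hn | hn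
  · subst hn
    have h1 : P ((0:ℕ) : ℤ) = 1 := by norm_num [hP0]
    have h2 : P (((0:ℕ):ℤ) - r) = 0 := hPneg _ (by push_cast; omega)
    rw [h1, h2, smul_zero, add_zero, one_mul, mul_one]
  · have hnK : ((n : RatFunc ℚ)) ≠ 0 := Nat.cast_ne_zero.mpr (by omega)
    apply smul_cancelK hnK
    have key := congrArg (fun x => a r * x) (hPrec n hn)
    simp only [Finset.mul_sum, mul_smul_comm] at key
    have hterm : ∀ s ∈ Finset.Icc 1 n,
        ((s : RatFunc ℚ) / qint s) • (a r * (b s * P ((n : ℤ) - s))) =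
        (((s : RatFunc ℚ) / qint s) • (b s * P ((n : ℤ) - s))) * a r
        + c • (((s : RatFunc ℚ) / qint s) • (b s * P (((n : ℤ) - r) - s)))
        + (if r = s then ((s : RatFunc ℚ) / qint s) •
            ((((-1 : RatFunc ℚ) ^ (r + 1) * qint r ^ 2 / (r : RatFunc ℚ))) • P ((n : ℤ) - s))
          else 0) := by
      intro s hs
      rw [Finset.mem_Icc] at hs
      have hs1 : 1 ≤ s := hs.1
      have hab : a r * b s = b s * a r
          + (if r = s then
              (((-1 : RatFunc ℚ) ^ (r + 1) * qint r ^ 2 / (r : RatFunc ℚ)) • (1 : A))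
            else 0) := sub_eq_iff_eq_add'.mp (hcomm r s hr hs1)
      have hIH : a r * P ((n : ℤ) - s) = P ((n : ℤ) - s) * a r + c • P (((n : ℤ) - r) - s) := by
        have hcast : ((n : ℤ) - s) = ((n - s : ℕ) : ℤ) := by omega
        have hcast2 : (((n - s : ℕ) : ℤ) - r) = ((n : ℤ) - r) - s := by omega
        rw [hcast, IH (n - s) (by omega), hcast2]
      calc ((s : RatFunc ℚ) / qint s) • (a r * (b s * P ((n : ℤ) - s)))
          = ((s : RatFunc ℚ) / qint s) • (b s * (a r * P ((n : ℤ) - s)))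
            + ((s : RatFunc ℚ) / qint s) •
              ((if r = s then
                (((-1 : RatFunc ℚ) ^ (r + 1) * qint r ^ 2 / (r : RatFunc ℚ)) • (1 : A))
               else 0) * P ((n : ℤ) - s)) := by
            rw [← mul_assoc, hab, add_mul, smul_add, mul_assoc]
        _ = _ := by
            rw [hIH, mul_add, smul_add]
            congr 1
            · congr 1
              · rw [← mul_assoc, smul_mul_assoc]
              · rw [mul_smul_comm, smul_comm]
            · rw [ite_mul, zero_mul, smul_ite, smul_zero, smul_mul_assoc, one_mul]
    rw [Finset.sum_congr rfl hterm, Finset.sum_add_distrib, Finset.sum_add_distrib,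
      ← Finset.sum_mul, ← Finset.smul_sum, ← hPrec n hn, Finset.sum_ite_eq] at key
    rw [key, smul_add, smul_mul_assoc, add_assoc]
    congr 1
    rcases lt_trichotomy n r with h | h | h
    · have hz : ∀ s ∈ Finset.Icc 1 n,
          ((s : RatFunc ℚ) / qint s) • (b s * P (((n : ℤ) - r) - s)) = 0 := by
        intro s hs
        rw [Finset.mem_Icc] at hs
        rw [hPneg _ (by omega), mul_zero, smul_zero]
      rw [Finset.sum_eq_zero hz, smul_zero, zero_add, if_neg (by rw [Finset.mem_Icc]; omega),
        hPneg ((n:ℤ) - r) (by omega), smul_zero, smul_zero]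
    · have hz : ∀ s ∈ Finset.Icc 1 n,
          ((s : RatFunc ℚ) / qint s) • (b s * P (((n : ℤ) - r) - s)) = 0 := by
        intro s hs
        rw [Finset.mem_Icc] at hs
        rw [hPneg _ (by omega), mul_zero, smul_zero]
      rw [Finset.sum_eq_zero hz, smul_zero, zero_add, if_pos (by rw [Finset.mem_Icc]; omega),
        smul_smul, smul_smul]
      congr 1
      have hq := qint_ne_zero_s3 r hr
      have hr0 : ((r : RatFunc ℚ)) ≠ 0 := Nat.cast_ne_zero.mpr (by omega)
      have hnr : (n : RatFunc ℚ) = (r : RatFunc ℚ) := by rw [h]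
      rw [hnr, hcdef]
      field_simp
    · have hsub : Finset.Icc 1 (n - r) ⊆ Finset.Icc 1 n :=
        Finset.Icc_subset_Icc_right (by omega)
      have hS2 : ∑ s ∈ Finset.Icc 1 n,
          ((s : RatFunc ℚ) / qint s) • (b s * P (((n : ℤ) - r) - s)) =
          ((n - r : ℕ) : RatFunc ℚ) • P ((n - r : ℕ)) := by
        rw [← Finset.sum_subset hsub]
        · rw [hPrec (n - r) (by omega)]
          apply Finset.sum_congr rfl
          intro s hs
          rw [Finset.mem_Icc] at hs
          have : (((n - r : ℕ) : ℤ) - s) = ((n : ℤ) - r) - s := by omega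
          rw [this]
        · intro s hs hns
          rw [Finset.mem_Icc] at hs hns
          rw [hPneg _ (by omega), mul_zero, smul_zero]
      rw [hS2, if_pos (by rw [Finset.mem_Icc]; omega), smul_smul, smul_smul, smul_smul]
      have hcast2 : ((n - r : ℕ) : ℤ) = (n : ℤ) - r := by omega
      rw [hcast2, ← add_smul]
      congr 1
      have hq := qint_ne_zero_s3 r hr
      have hr0 : ((r : RatFunc ℚ)) ≠ 0 := Nat.cast_ne_zero.mpr (by omega)
      have hnr : ((n - r : ℕ) : RatFunc ℚ) = (n : RatFunc ℚ) - (r : RatFunc ℚ) := by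
        push_cast [Nat.cast_sub (le_of_lt h)]
        ring
      rw [hnr, hcdef]
      field_simp
      ring

lemma Q1P_full {A : Type*} [Ring A] [Algebra (RatFunc ℚ) A]
    (b a : ℕ → A) (P Q1 : ℤ → A)
    (hP0 : P 0 = 1)
    (hPneg : ∀ k : ℤ, k < 0 → P k = 0)
    (hPrec : ∀ n : ℕ, 1 ≤ n →
      (n : RatFunc ℚ) • P n =
        ∑ m ∈ Finset.Icc 1 n, ((m : RatFunc ℚ) / qint m) • (b m * P ((n : ℤ) - m)))
    (hQ10 : Q1 0 = 1)
    (hQ1neg : ∀ k : ℤ, k < 0 → Q1 k = 0)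
    (hQ1rec : ∀ n : ℕ, 1 ≤ n →
      (n : RatFunc ℚ) • Q1 n =
        ∑ m ∈ Finset.Icc 1 n,
          ((-1 : RatFunc ℚ) ^ (m + 1) * (m : RatFunc ℚ) / qint m) • (a m * Q1 ((n : ℤ) - m)))
    (hcomm : ∀ m m' : ℕ, 1 ≤ m → 1 ≤ m' →
      a m * b m' - b m' * a m =
        if m = m' then
          (((-1 : RatFunc ℚ) ^ (m + 1) * qint m ^ 2 / (m : RatFunc ℚ)) • (1 : A))
        else 0) :
    ∀ m n : ℕ, Q1 m * P n
      = ∑ k ∈ Finset.range (n+1), P ((n:ℤ) - k) * Q1 ((m:ℤ) - k) := by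
  intro m
  induction m using Nat.strong_induction_on with
  | _ m IH =>
  intro n
  rcases Nat.eq_zero_or_pos m with hm | hm
  · subst hm
    have h0 : Q1 ((0:ℕ):ℤ) = 1 := by norm_num [hQ10]
    rw [h0, one_mul]
    symm
    have hs : ∑ k ∈ Finset.range (n+1), P ((n:ℤ) - k) * Q1 (((0:ℕ):ℤ) - k)
        = P ((n:ℤ) - (0:ℕ)) * Q1 (((0:ℕ):ℤ) - (0:ℕ)) := by
      apply Finset.sum_eq_single 0
      · intro k _ hk0
        rw [hQ1neg _ (by push_cast; omega), mul_zero]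
      · intro h
        exact absurd (Finset.mem_range.mpr (by omega)) h
    rw [hs]
    norm_num [hQ10]
  · have hmK : ((m : RatFunc ℚ)) ≠ 0 := Nat.cast_ne_zero.mpr (by omega)
    apply smul_cancelK hmK
    have key := congrArg (fun x => x * P (n:ℕ)) (hQ1rec m hm)
    simp only [smul_mul_assoc, Finset.sum_mul] at key
    have hterm : ∀ r ∈ Finset.Icc 1 m,
        ((-1 : RatFunc ℚ) ^ (r + 1) * (r : RatFunc ℚ) / qint r) •
            (a r * Q1 ((m:ℤ) - r) * P n)
        = (∑ k ∈ Finset.range (n+1),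
            ((-1 : RatFunc ℚ) ^ (r + 1) * (r : RatFunc ℚ) / qint r) •
              (P ((n:ℤ) - k) * (a r * Q1 (((m:ℤ) - k) - r))))
          + ∑ k ∈ Finset.range (n+1),
              (P ((n:ℤ) - ((k + r : ℕ) : ℤ)) * Q1 ((m:ℤ) - ((k + r : ℕ) : ℤ))) := by
      intro r hrIcc
      rw [Finset.mem_Icc] at hrIcc
      obtain ⟨hr1, hrm⟩ := hrIcc
      have hq := qint_ne_zero_s3 r hr1
      have hr0 : ((r : RatFunc ℚ)) ≠ 0 := Nat.cast_ne_zero.mpr (by omega)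
      have hec : ((-1 : RatFunc ℚ) ^ (r + 1) * (r : RatFunc ℚ) / qint r) *
          ((-1 : RatFunc ℚ) ^ (r + 1) * qint r / (r : RatFunc ℚ)) = 1 := by
        have h1 : ((-1 : RatFunc ℚ)^(r+1)) * ((-1 : RatFunc ℚ)^(r+1)) = 1 := by
          rw [← pow_add]
          exact Even.neg_one_pow ⟨r+1, by ring⟩
        field_simp
        linear_combination (1 : RatFunc ℚ) *
          (Even.neg_one_pow ⟨r, by ring⟩ : (-1 : RatFunc ℚ) ^ (r * 2) = 1)
      have hcast : ((m:ℤ) - r) = ((m - r : ℕ) : ℤ) := by omega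
      rw [mul_assoc, hcast, IH (m - r) (by omega) n, Finset.mul_sum, Finset.smul_sum,
        ← Finset.sum_add_distrib]
      apply Finset.sum_congr rfl
      intro k hk
      rw [Finset.mem_range] at hk
      have haPk : a r * P ((n:ℤ) - k) = P ((n:ℤ) - k) * a r
          + ((-1 : RatFunc ℚ) ^ (r + 1) * qint r / (r : RatFunc ℚ)) •
              P ((n:ℤ) - ((k + r : ℕ) : ℤ)) := by
        have h := aP_comm b a P hP0 hPneg hPrec hcomm r hr1 (n - k)
        have e1 : ((n - k : ℕ) : ℤ) = (n:ℤ) - k := by omega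
        have e2 : (((n - k : ℕ) : ℤ) - r) = (n:ℤ) - ((k + r : ℕ) : ℤ) := by push_cast; omega
        rw [e1] at h
        rw [← e1, e2] at h
        rw [e1] at h
        exact h
      have hQcast : (((m - r : ℕ) : ℤ) - k) = ((m:ℤ) - k) - r := by omega
      have hQcast2 : (((m - r : ℕ) : ℤ) - k) = (m:ℤ) - ((k + r : ℕ) : ℤ) := by push_cast; omega
      calc ((-1 : RatFunc ℚ) ^ (r + 1) * (r : RatFunc ℚ) / qint r) •
              (a r * (P ((n:ℤ) - k) * Q1 (((m - r : ℕ) : ℤ) - k)))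
          = ((-1 : RatFunc ℚ) ^ (r + 1) * (r : RatFunc ℚ) / qint r) •
              (P ((n:ℤ) - k) * (a r * Q1 (((m - r : ℕ) : ℤ) - k)))
            + (((-1 : RatFunc ℚ) ^ (r + 1) * (r : RatFunc ℚ) / qint r) *
                ((-1 : RatFunc ℚ) ^ (r + 1) * qint r / (r : RatFunc ℚ))) •
              (P ((n:ℤ) - ((k + r : ℕ) : ℤ)) * Q1 (((m - r : ℕ) : ℤ) - k)) := by
            rw [← mul_assoc, haPk, add_mul, mul_assoc, smul_mul_assoc, smul_add, smul_smul]
        _ = _ := by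
            congr 1
            · rw [hQcast]
            · rw [hQcast2, hec, one_smul]
    rw [Finset.sum_congr rfl hterm, Finset.sum_add_distrib, Finset.sum_comm] at key
    have hclaim1 : ∀ k ∈ Finset.range (n+1),
        ∑ r ∈ Finset.Icc 1 m,
          ((-1 : RatFunc ℚ) ^ (r + 1) * (r : RatFunc ℚ) / qint r) •
            (P ((n:ℤ) - k) * (a r * Q1 (((m:ℤ) - k) - r)))
        = ((m : RatFunc ℚ) - (k : RatFunc ℚ)) • (P ((n:ℤ) - k) * Q1 ((m:ℤ) - k)) := by
      intro k _
      have hstep : ∑ r ∈ Finset.Icc 1 m,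
          ((-1 : RatFunc ℚ) ^ (r + 1) * (r : RatFunc ℚ) / qint r) •
            (P ((n:ℤ) - k) * (a r * Q1 (((m:ℤ) - k) - r)))
          = P ((n:ℤ) - k) * ∑ r ∈ Finset.Icc 1 m,
              ((-1 : RatFunc ℚ) ^ (r + 1) * (r : RatFunc ℚ) / qint r) •
                (a r * Q1 (((m:ℤ) - k) - r)) := by
        rw [Finset.mul_sum]
        exact Finset.sum_congr rfl (fun r _ => (mul_smul_comm _ _ _).symm)
      rw [hstep]
      have hinner : ∑ r ∈ Finset.Icc 1 m,
          ((-1 : RatFunc ℚ) ^ (r + 1) * (r : RatFunc ℚ) / qint r) •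
            (a r * Q1 (((m:ℤ) - k) - r))
          = ((m : RatFunc ℚ) - (k : RatFunc ℚ)) • Q1 ((m:ℤ) - k) := by
        rcases lt_or_ge k m with hkm | hkm
        · have hsub : Finset.Icc 1 (m - k) ⊆ Finset.Icc 1 m :=
            Finset.Icc_subset_Icc_right (by omega)
          have hext : ∑ r ∈ Finset.Icc 1 m,
              ((-1 : RatFunc ℚ) ^ (r + 1) * (r : RatFunc ℚ) / qint r) •
                (a r * Q1 (((m:ℤ) - k) - r))
              = ∑ r ∈ Finset.Icc 1 (m - k),
                  ((-1 : RatFunc ℚ) ^ (r + 1) * (r : RatFunc ℚ) / qint r) •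
                    (a r * Q1 (((m - k : ℕ) : ℤ) - r)) := by
            rw [← Finset.sum_subset hsub]
            · apply Finset.sum_congr rfl
              intro r _
              have : (((m - k : ℕ) : ℤ) - r) = ((m:ℤ) - k) - r := by omega
              rw [this]
            · intro r hr hnr
              rw [Finset.mem_Icc] at hr hnr
              rw [hQ1neg _ (by omega), mul_zero, smul_zero]
          rw [hext, ← hQ1rec (m - k) (by omega)]
          have e1 : ((m - k : ℕ) : RatFunc ℚ) = (m : RatFunc ℚ) - (k : RatFunc ℚ) := by
            push_cast [Nat.cast_sub (le_of_lt hkm)]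
            ring
          have e2 : ((m - k : ℕ) : ℤ) = (m:ℤ) - k := by omega
          rw [e1, e2]
        · have hz : ∀ r ∈ Finset.Icc 1 m,
              ((-1 : RatFunc ℚ) ^ (r + 1) * (r : RatFunc ℚ) / qint r) •
                (a r * Q1 (((m:ℤ) - k) - r)) = 0 := by
            intro r hr
            rw [Finset.mem_Icc] at hr
            rw [hQ1neg _ (by omega), mul_zero, smul_zero]
          rw [Finset.sum_eq_zero hz]
          rcases eq_or_lt_of_le hkm with heq | hlt
          · rw [← heq, sub_self, zero_smul]
          · rw [hQ1neg _ (by omega), smul_zero]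
      rw [hinner, mul_smul_comm]
    rw [Finset.sum_congr rfl hclaim1] at key
    have hshift := sum_shift_reindex
      (fun j => P ((n:ℤ) - j) * Q1 ((m:ℤ) - j)) m n
      (fun j hj => by
        show P ((n:ℤ) - j) * Q1 ((m:ℤ) - j) = 0
        rw [hPneg _ (by omega), zero_mul])
      (fun j hj => by
        show P ((n:ℤ) - j) * Q1 ((m:ℤ) - j) = 0
        rw [hQ1neg _ (by omega), mul_zero])
    rw [hshift] at key
    have hnat : ∀ j ∈ Finset.range (n+1),
        j • (P ((n:ℤ) - j) * Q1 ((m:ℤ) - j))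
        = (j : RatFunc ℚ) • (P ((n:ℤ) - j) * Q1 ((m:ℤ) - j)) :=
      fun j _ => (Nat.cast_smul_eq_nsmul _ _ _).symm
    rw [Finset.sum_congr rfl hnat, ← Finset.sum_add_distrib] at key
    have hfinal : ∀ k ∈ Finset.range (n+1),
        ((m : RatFunc ℚ) - (k : RatFunc ℚ)) • (P ((n:ℤ) - k) * Q1 ((m:ℤ) - k))
          + (k : RatFunc ℚ) • (P ((n:ℤ) - k) * Q1 ((m:ℤ) - k))
        = (m : RatFunc ℚ) • (P ((n:ℤ) - k) * Q1 ((m:ℤ) - k)) := by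
      intro k _
      rw [← add_smul, sub_add_cancel]
    rw [Finset.sum_congr rfl hfinal, ← Finset.smul_sum] at key
    exact key

/-- The adjacent-node mixed relation:
`Q^{(1^m)} P^{(n)} = ∑_{k=0}^{min(m,n)} P^{(n-k)} Q^{(1^{m-k})}`. -/
theorem heisenberg_Q1P_adjacent_nodes
    {A : Type*} [Ring A] [Algebra (RatFunc ℚ) A]
    (b a : ℕ → A)
    (hb : ∀ m m' : ℕ, Commute (b m) (b m'))
    (ha : ∀ m m' : ℕ, Commute (a m) (a m'))
    (P Q1 : ℤ → A)
    (hP0 : P 0 = 1)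
    (hPneg : ∀ k : ℤ, k < 0 → P k = 0)
    (hPrec : ∀ n : ℕ, 1 ≤ n →
      (n : RatFunc ℚ) • P n =
        ∑ m ∈ Finset.Icc 1 n, ((m : RatFunc ℚ) / qint m) • (b m * P ((n : ℤ) - m)))
    (hQ10 : Q1 0 = 1)
    (hQ1neg : ∀ k : ℤ, k < 0 → Q1 k = 0)
    (hQ1rec : ∀ n : ℕ, 1 ≤ n →
      (n : RatFunc ℚ) • Q1 n =
        ∑ m ∈ Finset.Icc 1 n,
          ((-1 : RatFunc ℚ) ^ (m + 1) * (m : RatFunc ℚ) / qint m) • (a m * Q1 ((n : ℤ) - m)))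
    (hcomm : ∀ m m' : ℕ, 1 ≤ m → 1 ≤ m' →
      a m * b m' - b m' * a m =
        if m = m' then
          (((-1 : RatFunc ℚ) ^ (m + 1) * qint m ^ 2 / (m : RatFunc ℚ)) • (1 : A))
        else 0)
    (m n : ℕ) :
    Q1 m * P n =
      ∑ k ∈ Finset.range (min m n + 1), P ((n : ℤ) - k) * Q1 ((m : ℤ) - k) := by
  rw [Q1P_full b a P Q1 hP0 hPneg hPrec hQ10 hQ1neg hQ1rec hcomm m n]
  symm
  apply Finset.sum_subset
  · exact Finset.range_subset_range.mpr (by omega)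
  · intro k hk hnk
    rw [Finset.mem_range] at hk hnk
    rw [hQ1neg _ (by omega), mul_zero]
end

section
/- (Gaussian elimination, Lemma 6.2.) Let C be an additive category and let X• be a cochain complex in C. Fix n ∈ ℤ and suppose X^n = X ⊕ Y and X^{n+1} = Z ⊕ W are biproducts, write u := d^{n−1} : X^{n−1} → X ⊕ Y and v := d^{n+1} : Z ⊕ W → X^{n+2}, and write the differential d^n : X ⊕ Y → Z ⊕ W in matrix form with components A : X → Z, B : Y → Z, C' : X → W, D : Y → W. If D is an isomorphism, then X• is homotopy equivalent to the cochain complex X'• that coincides with X• in every degree other than n and n+1, has X'^n = X and X'^{n+1} = Z, and has differentials d'^{n−1} = π_X ∘ u, d'^n = A − B ∘ D^{−1} ∘ C', d'^{n+1} = v ∘ ι_Z, with all other differentials unchanged (here π_X and ι_Z are the biproduct projection and inclusion). -/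
open CategoryTheory Limits

set_option linter.unusedSectionVars false

namespace GaussAux

noncomputable section

variable {C : Type*} [Category C] [Preadditive C] [HasBinaryBiproducts C]
  (K : CochainComplex C ℤ) (n : ℤ) (Xo Yo Zo Wo : C)
  (en : K.X n ≅ Xo ⊞ Yo) (en1 : K.X (n + 1) ≅ Zo ⊞ Wo)
  [IsIso (biprod.inr ≫ en.inv ≫ K.d n (n + 1) ≫ en1.hom ≫ biprod.snd)]

def Dinv : Wo ⟶ Yo := inv (biprod.inr ≫ en.inv ≫ K.d n (n + 1) ≫ en1.hom ≫ biprod.snd)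

@[simp] lemma c1' {T : C} (h : Yo ⟶ T) :
    biprod.inr ≫ en.inv ≫ K.d n (n + 1) ≫ en1.hom ≫ biprod.snd ≫ Dinv K n Xo Yo Zo Wo en en1 ≫ h = h := by
  have := IsIso.hom_inv_id_assoc (biprod.inr ≫ en.inv ≫ K.d n (n + 1) ≫ en1.hom ≫ biprod.snd) h
  simp only [Category.assoc] at this
  simpa [Dinv] using this

@[simp] lemma c1 :
    biprod.inr ≫ en.inv ≫ K.d n (n + 1) ≫ en1.hom ≫ biprod.snd ≫ Dinv K n Xo Yo Zo Wo en en1 = 𝟙 Yo := by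
  have := IsIso.hom_inv_id (biprod.inr ≫ en.inv ≫ K.d n (n + 1) ≫ en1.hom ≫ biprod.snd)
  simp only [Category.assoc] at this
  simpa [Dinv] using this

@[simp] lemma c2' {T : C} (h : Wo ⟶ T) :
    Dinv K n Xo Yo Zo Wo en en1 ≫ biprod.inr ≫ en.inv ≫ K.d n (n + 1) ≫ en1.hom ≫ biprod.snd ≫ h = h := by
  simp [Dinv]

@[simp] lemma c2 :
    Dinv K n Xo Yo Zo Wo en en1 ≫ biprod.inr ≫ en.inv ≫ K.d n (n + 1) ≫ en1.hom ≫ biprod.snd = 𝟙 Wo := by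
  simp [Dinv]

lemma expand {P Q R T : C} (w : P ⟶ Q ⊞ R) (X' : Q ⊞ R ⟶ T) :
    w ≫ X' = w ≫ biprod.fst ≫ biprod.inl ≫ X' + w ≫ biprod.snd ≫ biprod.inr ≫ X' := by
  conv_lhs => rw [← Category.id_comp X', ← biprod.total]
  simp only [Preadditive.comp_add, Preadditive.add_comp, Category.assoc]

lemma u_snd' (j : ℤ) {T : C} (h : Yo ⟶ T) :
    K.d j n ≫ en.hom ≫ biprod.snd ≫ h =
      -(K.d j n ≫ en.hom ≫ biprod.fst ≫ biprod.inl ≫ en.inv ≫ K.d n (n + 1) ≫ en1.hom ≫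
          biprod.snd ≫ Dinv K n Xo Yo Zo Wo en en1 ≫ h) := by
  have z : (K.d j n ≫ en.hom) ≫
      (en.inv ≫ K.d n (n + 1) ≫ en1.hom ≫ biprod.snd ≫ Dinv K n Xo Yo Zo Wo en en1 ≫ h) = 0 := by
    simp
  rw [expand] at z
  simp only [Category.assoc, c1'] at z
  exact eq_neg_of_add_eq_zero_right z

lemma v_inr' (k : ℤ) {T : C} (h : K.X k ⟶ T) :
    biprod.inr ≫ en1.inv ≫ K.d (n + 1) k ≫ h =
      -(Dinv K n Xo Yo Zo Wo en en1 ≫ biprod.inr ≫ en.inv ≫ K.d n (n + 1) ≫ en1.hom ≫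
          biprod.fst ≫ biprod.inl ≫ en1.inv ≫ K.d (n + 1) k ≫ h) := by
  have z : (Dinv K n Xo Yo Zo Wo en en1 ≫ biprod.inr ≫ en.inv ≫ K.d n (n + 1) ≫ en1.hom) ≫
      (en1.inv ≫ K.d (n + 1) k ≫ h) = 0 := by
    simp
  rw [expand] at z
  simp only [Category.assoc, c2'] at z
  exact eq_neg_of_add_eq_zero_right z

def dm : Xo ⟶ Zo :=
  biprod.inl ≫ en.inv ≫ K.d n (n + 1) ≫ en1.hom ≫ biprod.fst -
    (biprod.inl ≫ en.inv ≫ K.d n (n + 1) ≫ en1.hom ≫ biprod.snd) ≫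
      Dinv K n Xo Yo Zo Wo en en1 ≫
      (biprod.inr ≫ en.inv ≫ K.d n (n + 1) ≫ en1.hom ≫ biprod.fst)

lemma u_dm (j : ℤ) {T : C} (h : Zo ⟶ T) :
    K.d j n ≫ en.hom ≫ biprod.fst ≫ dm K n Xo Yo Zo Wo en en1 ≫ h = 0 := by
  have z : (K.d j n ≫ en.hom) ≫ (en.inv ≫ K.d n (n + 1) ≫ en1.hom ≫ biprod.fst ≫ h) = 0 := by
    simp
  rw [expand] at z
  simp only [Category.assoc] at z
  rw [u_snd' K n Xo Yo Zo Wo en en1] at z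
  simp only [dm, Preadditive.sub_comp, Preadditive.comp_sub, Category.assoc, sub_eq_zero]
  rw [← sub_eq_zero]
  simpa [sub_eq_add_neg] using z

lemma dm_v (k : ℤ) {T : C} (h : K.X k ⟶ T) :
    dm K n Xo Yo Zo Wo en en1 ≫ biprod.inl ≫ en1.inv ≫ K.d (n + 1) k ≫ h = 0 := by
  have z : (biprod.inl ≫ en.inv ≫ K.d n (n + 1) ≫ en1.hom) ≫ (en1.inv ≫ K.d (n + 1) k ≫ h) = 0 := by
    simp
  rw [expand] at z
  simp only [Category.assoc] at z
  rw [v_inr' K n Xo Yo Zo Wo en en1] at z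
  simp only [dm, Preadditive.sub_comp, Preadditive.comp_sub, Category.assoc, sub_eq_zero]
  rw [← sub_eq_zero]
  simpa [sub_eq_add_neg] using z

def obj (i : ℤ) : C := if i = n then Xo else if i = n + 1 then Zo else K.X i

lemma obj_at_n : obj K n Xo Zo n = Xo := by unfold obj; rw [if_pos rfl]

lemma obj_at_n1 : obj K n Xo Zo (n + 1) = Zo := by
  unfold obj; rw [if_neg (by omega), if_pos rfl]

lemma obj_at (i : ℤ) (h1 : i ≠ n) (h2 : i ≠ n + 1) : obj K n Xo Zo i = K.X i := by
  unfold obj; rw [if_neg h1, if_neg h2]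

def dd (i : ℤ) : obj K n Xo Zo i ⟶ obj K n Xo Zo (i + 1) :=
  if h0 : i = n then
    eqToHom (by rw [h0, obj_at_n]) ≫ dm K n Xo Yo Zo Wo en en1 ≫
      eqToHom (by rw [h0]; exact (obj_at_n1 K n Xo Zo).symm)
  else if h1 : i + 1 = n then
    eqToHom (obj_at K n Xo Zo i h0 (by omega)) ≫ K.d i n ≫ en.hom ≫ biprod.fst ≫
      eqToHom (by rw [h1]; exact (obj_at_n K n Xo Zo).symm)
  else if h2 : i = n + 1 then
    eqToHom (by rw [h2, obj_at_n1]) ≫ biprod.inl ≫ en1.inv ≫ K.d (n + 1) (i + 1) ≫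
      eqToHom ((obj_at K n Xo Zo (i + 1) h1 (by omega)).symm)
  else
    eqToHom (obj_at K n Xo Zo i h0 h2) ≫ K.d i (i + 1) ≫
      eqToHom ((obj_at K n Xo Zo (i + 1) h1 (by omega)).symm)

lemma dd_at_n :
    dd K n Xo Yo Zo Wo en en1 n =
      eqToHom (obj_at_n K n Xo Zo) ≫ dm K n Xo Yo Zo Wo en en1 ≫
        eqToHom (obj_at_n1 K n Xo Zo).symm := by
  unfold dd; rw [dif_pos rfl]

lemma dd_into (i : ℤ) (h : i + 1 = n) :
    dd K n Xo Yo Zo Wo en en1 i =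
      eqToHom (obj_at K n Xo Zo i (by omega) (by omega)) ≫ K.d i n ≫ en.hom ≫ biprod.fst ≫
        eqToHom (by rw [h]; exact (obj_at_n K n Xo Zo).symm) := by
  unfold dd; rw [dif_neg (by omega), dif_pos h]

lemma dd_at_n1 :
    dd K n Xo Yo Zo Wo en en1 (n + 1) =
      eqToHom (obj_at_n1 K n Xo Zo) ≫ biprod.inl ≫ en1.inv ≫ K.d (n + 1) (n + 1 + 1) ≫
        eqToHom ((obj_at K n Xo Zo (n + 1 + 1) (by omega) (by omega)).symm) := by
  unfold dd; rw [dif_neg (by omega), dif_neg (by omega), dif_pos rfl]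

lemma dd_other (i : ℤ) (h0 : i ≠ n) (h1 : i + 1 ≠ n) (h2 : i ≠ n + 1) :
    dd K n Xo Yo Zo Wo en en1 i =
      eqToHom (obj_at K n Xo Zo i h0 h2) ≫ K.d i (i + 1) ≫
        eqToHom ((obj_at K n Xo Zo (i + 1) h1 (by omega)).symm) := by
  unfold dd; rw [dif_neg h0, dif_neg h1, dif_neg h2]

lemma sq (i : ℤ) : dd K n Xo Yo Zo Wo en en1 i ≫ dd K n Xo Yo Zo Wo en en1 (i + 1) = 0 := by
  by_cases h0 : i = n
  · subst h0
    rw [dd_at_n, dd_at_n1]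
    simp [dm_v]
  · by_cases h1 : i + 1 = n
    · subst h1
      rw [dd_into K (i + 1) Xo Yo Zo Wo en en1 i rfl, dd_at_n]
      simp [u_dm]
    · by_cases h2 : i = n + 1
      · subst h2
        rw [dd_at_n1, dd_other K n Xo Yo Zo Wo en en1 (n + 1 + 1) (by omega) (by omega) (by omega)]
        simp
      · by_cases h3 : i + 1 + 1 = n
        · rw [dd_other K n Xo Yo Zo Wo en en1 i h0 h1 h2,
            dd_into K n Xo Yo Zo Wo en en1 (i + 1) h3]
          simp
        · rw [dd_other K n Xo Yo Zo Wo en en1 i h0 h1 h2,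
            dd_other K n Xo Yo Zo Wo en en1 (i + 1) h1 h3 (by omega)]
          simp

abbrev theK' : CochainComplex C ℤ :=
  CochainComplex.of (obj K n Xo Zo) (dd K n Xo Yo Zo Wo en en1) (sq K n Xo Yo Zo Wo en en1)

lemma theK'_d (i j : ℤ) (h : i + 1 = j) :
    (theK' K n Xo Yo Zo Wo en en1).d i j =
      dd K n Xo Yo Zo Wo en en1 i ≫ eqToHom (by rw [h]) := by
  subst h
  simp [theK']

def ff (i : ℤ) : K.X i ⟶ obj K n Xo Zo i :=
  if h0 : i = n then
    eqToHom (by rw [h0]) ≫ en.hom ≫ biprod.fst ≫ eqToHom (by rw [h0, obj_at_n])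
  else if h2 : i = n + 1 then
    eqToHom (by rw [h2]) ≫ en1.hom ≫
      biprod.desc (𝟙 Zo)
        (-(Dinv K n Xo Yo Zo Wo en en1 ≫ biprod.inr ≫ en.inv ≫ K.d n (n + 1) ≫ en1.hom ≫
            biprod.fst)) ≫
      eqToHom (by rw [h2, obj_at_n1])
  else eqToHom (obj_at K n Xo Zo i h0 h2).symm

def gf (i : ℤ) : obj K n Xo Zo i ⟶ K.X i :=
  if h0 : i = n then
    eqToHom (by rw [h0, obj_at_n]) ≫
      biprod.lift (𝟙 Xo)
        (-(biprod.inl ≫ en.inv ≫ K.d n (n + 1) ≫ en1.hom ≫ biprod.snd ≫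
            Dinv K n Xo Yo Zo Wo en en1)) ≫
      en.inv ≫ eqToHom (by rw [h0])
  else if h2 : i = n + 1 then
    eqToHom (by rw [h2, obj_at_n1]) ≫ biprod.inl ≫ en1.inv ≫ eqToHom (by rw [h2])
  else eqToHom (obj_at K n Xo Zo i h0 h2)

lemma ff_at_n :
    ff K n Xo Yo Zo Wo en en1 n = en.hom ≫ biprod.fst ≫ eqToHom (obj_at_n K n Xo Zo).symm := by
  unfold ff; rw [dif_pos rfl]; simp

lemma ff_at_n1 :
    ff K n Xo Yo Zo Wo en en1 (n + 1) =
      en1.hom ≫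
        biprod.desc (𝟙 Zo)
          (-(Dinv K n Xo Yo Zo Wo en en1 ≫ biprod.inr ≫ en.inv ≫ K.d n (n + 1) ≫ en1.hom ≫
              biprod.fst)) ≫
        eqToHom (obj_at_n1 K n Xo Zo).symm := by
  unfold ff; rw [dif_neg (by omega), dif_pos rfl]; simp

lemma ff_other (i : ℤ) (h0 : i ≠ n) (h2 : i ≠ n + 1) :
    ff K n Xo Yo Zo Wo en en1 i = eqToHom (obj_at K n Xo Zo i h0 h2).symm := by
  unfold ff; rw [dif_neg h0, dif_neg h2]

lemma gf_at_n :
    gf K n Xo Yo Zo Wo en en1 n =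
      eqToHom (obj_at_n K n Xo Zo) ≫
        biprod.lift (𝟙 Xo)
          (-(biprod.inl ≫ en.inv ≫ K.d n (n + 1) ≫ en1.hom ≫ biprod.snd ≫
              Dinv K n Xo Yo Zo Wo en en1)) ≫ en.inv := by
  unfold gf; rw [dif_pos rfl]; simp

lemma gf_at_n1 :
    gf K n Xo Yo Zo Wo en en1 (n + 1) =
      eqToHom (obj_at_n1 K n Xo Zo) ≫ biprod.inl ≫ en1.inv := by
  unfold gf; rw [dif_neg (by omega), dif_pos rfl]; simp

lemma gf_other (i : ℤ) (h0 : i ≠ n) (h2 : i ≠ n + 1) :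
    gf K n Xo Yo Zo Wo en en1 i = eqToHom (obj_at K n Xo Zo i h0 h2) := by
  unfold gf; rw [dif_neg h0, dif_neg h2]

lemma u_snd (j : ℤ) :
    K.d j n ≫ en.hom ≫ biprod.snd =
      -(K.d j n ≫ en.hom ≫ biprod.fst ≫ biprod.inl ≫ en.inv ≫ K.d n (n + 1) ≫ en1.hom ≫
          biprod.snd ≫ Dinv K n Xo Yo Zo Wo en en1) := by
  simpa using u_snd' K n Xo Yo Zo Wo en en1 j (𝟙 Yo)

lemma v_inr (k : ℤ) :
    biprod.inr ≫ en1.inv ≫ K.d (n + 1) k =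
      -(Dinv K n Xo Yo Zo Wo en en1 ≫ biprod.inr ≫ en.inv ≫ K.d n (n + 1) ≫ en1.hom ≫
          biprod.fst ≫ biprod.inl ≫ en1.inv ≫ K.d (n + 1) k) := by
  simpa using v_inr' K n Xo Yo Zo Wo en en1 k (𝟙 _)

lemma fcomm (i : ℤ) :
    ff K n Xo Yo Zo Wo en en1 i ≫ dd K n Xo Yo Zo Wo en en1 i =
      K.d i (i + 1) ≫ ff K n Xo Yo Zo Wo en en1 (i + 1) := by
  by_cases h0 : i = n
  · subst h0
    rw [ff_at_n, dd_at_n, ff_at_n1]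
    simp only [Category.assoc, eqToHom_trans_assoc, eqToHom_refl, Category.id_comp]
    rw [← cancel_epi en.inv]
    apply biprod.hom_ext'
    · simp only [dm, biprod.desc_eq, Preadditive.comp_add, Preadditive.add_comp,
        Preadditive.sub_comp, Preadditive.comp_sub, Preadditive.comp_neg,
        Preadditive.neg_comp, Category.assoc, Iso.inv_hom_id_assoc, Category.id_comp,
        Category.comp_id, biprod.inl_fst_assoc, biprod.inl_snd_assoc]
      abel
    · simp [biprod.desc_eq, Preadditive.comp_add, Preadditive.add_comp,
        Preadditive.sub_comp, Preadditive.comp_sub]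
  · by_cases h1 : i + 1 = n
    · subst h1
      rw [ff_other K (i + 1) Xo Yo Zo Wo en en1 i (by omega) (by omega),
        dd_into K (i + 1) Xo Yo Zo Wo en en1 i rfl, ff_at_n]
      simp
    · by_cases h2 : i = n + 1
      · subst h2
        rw [ff_at_n1, dd_at_n1, ff_other K n Xo Yo Zo Wo en en1 (n + 1 + 1) (by omega) (by omega)]
        simp only [Category.assoc, eqToHom_trans_assoc, eqToHom_refl, Category.id_comp]
        rw [← cancel_epi en1.inv]
        apply biprod.hom_ext'
        · simp [biprod.desc_eq, Preadditive.comp_add, Preadditive.add_comp]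
        · simp only [biprod.desc_eq, Preadditive.comp_add, Preadditive.add_comp,
            Preadditive.comp_neg, Preadditive.neg_comp, Category.assoc,
            Iso.inv_hom_id_assoc, biprod.inr_fst_assoc, zero_comp, comp_zero,
            biprod.inr_snd_assoc, Category.id_comp, zero_add]
          rw [v_inr' K n Xo Yo Zo Wo en en1]
      · rw [ff_other K n Xo Yo Zo Wo en en1 i h0 h2,
          dd_other K n Xo Yo Zo Wo en en1 i h0 h1 h2,
          ff_other K n Xo Yo Zo Wo en en1 (i + 1) h1 (by omega)]
        simp

lemma gcomm (i : ℤ) :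
    gf K n Xo Yo Zo Wo en en1 i ≫ K.d i (i + 1) =
      dd K n Xo Yo Zo Wo en en1 i ≫ gf K n Xo Yo Zo Wo en en1 (i + 1) := by
  by_cases h0 : i = n
  · subst h0
    rw [gf_at_n, dd_at_n, gf_at_n1]
    simp only [Category.assoc, eqToHom_trans_assoc, eqToHom_refl, Category.id_comp]
    rw [cancel_epi (eqToHom (obj_at_n K i Xo Zo)), ← cancel_mono en1.hom]
    simp only [Category.assoc, eqToHom_trans_assoc, eqToHom_refl, Category.id_comp,
      Iso.inv_hom_id, Category.comp_id, Iso.inv_hom_id_assoc]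
    apply biprod.hom_ext
    · simp only [dm, biprod.lift_eq, Preadditive.comp_add, Preadditive.add_comp,
        Preadditive.sub_comp, Preadditive.comp_sub, Preadditive.comp_neg,
        Preadditive.neg_comp, Category.assoc, Category.id_comp, Category.comp_id,
        biprod.inl_fst, biprod.inr_fst, biprod.inl_snd, biprod.inr_snd,
        biprod.inl_fst_assoc, biprod.inr_fst_assoc, biprod.inl_snd_assoc,
        biprod.inr_snd_assoc, comp_zero, zero_comp, add_zero, zero_add]
      abel
    · simp [biprod.lift_eq, Preadditive.comp_add, Preadditive.add_comp,
        Preadditive.sub_comp, Preadditive.comp_sub]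
  · by_cases h1 : i + 1 = n
    · subst h1
      rw [gf_other K (i + 1) Xo Yo Zo Wo en en1 i (by omega) (by omega),
        dd_into K (i + 1) Xo Yo Zo Wo en en1 i rfl, gf_at_n]
      simp only [Category.assoc, eqToHom_trans_assoc, eqToHom_refl, Category.id_comp]
      rw [← cancel_mono en.hom]
      simp only [Category.assoc, Iso.inv_hom_id, Category.comp_id]
      apply biprod.hom_ext
      · simp [biprod.lift_eq, Preadditive.comp_add, Preadditive.add_comp]
      · simp only [biprod.lift_eq, Preadditive.comp_add, Preadditive.add_comp,
          Preadditive.comp_neg, Preadditive.neg_comp, Category.assoc,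
          biprod.inl_snd, comp_zero, zero_add, biprod.inr_snd, Category.comp_id,
          biprod.inl_fst, biprod.inr_fst, biprod.inl_snd_assoc, biprod.inr_snd_assoc]
        rw [u_snd K (i + 1) Xo Yo Zo Wo en en1 i]
        simp
    · by_cases h2 : i = n + 1
      · subst h2
        rw [gf_at_n1, dd_at_n1,
          gf_other K n Xo Yo Zo Wo en en1 (n + 1 + 1) (by omega) (by omega)]
        simp
      · rw [gf_other K n Xo Yo Zo Wo en en1 i h0 h2,
          dd_other K n Xo Yo Zo Wo en en1 i h0 h1 h2,
          gf_other K n Xo Yo Zo Wo en en1 (i + 1) h1 (by omega)]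
        simp

def fHom : K ⟶ theK' K n Xo Yo Zo Wo en en1 where
  f i := ff K n Xo Yo Zo Wo en en1 i
  comm' i j hij := by
    obtain rfl : i + 1 = j := hij
    simp only [theK', CochainComplex.of_d]
    exact fcomm K n Xo Yo Zo Wo en en1 i

def gHom : theK' K n Xo Yo Zo Wo en en1 ⟶ K where
  f i := gf K n Xo Yo Zo Wo en en1 i
  comm' i j hij := by
    obtain rfl : i + 1 = j := hij
    simp only [theK', CochainComplex.of_d]
    exact gcomm K n Xo Yo Zo Wo en en1 i

lemma gf_ff (i : ℤ) :
    gf K n Xo Yo Zo Wo en en1 i ≫ ff K n Xo Yo Zo Wo en en1 i = 𝟙 _ := by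
  by_cases h0 : i = n
  · subst h0
    rw [gf_at_n, ff_at_n]
    simp
  · by_cases h2 : i = n + 1
    · subst h2
      rw [gf_at_n1, ff_at_n1]
      simp
    · rw [gf_other K n Xo Yo Zo Wo en en1 i h0 h2, ff_other K n Xo Yo Zo Wo en en1 i h0 h2]
      simp

def hh (i j : ℤ) : K.X i ⟶ K.X j :=
  if h : i = n + 1 ∧ j = n then
    -(eqToHom (by rw [h.1]) ≫ en1.hom ≫ biprod.snd ≫ Dinv K n Xo Yo Zo Wo en en1 ≫
        biprod.inr ≫ en.inv ≫ eqToHom (by rw [h.2]))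
  else 0

lemma hh_val :
    hh K n Xo Yo Zo Wo en en1 (n + 1) n =
      -(en1.hom ≫ biprod.snd ≫ Dinv K n Xo Yo Zo Wo en en1 ≫ biprod.inr ≫ en.inv) := by
  unfold hh; rw [dif_pos ⟨rfl, rfl⟩]; simp

lemma hh_zero (i j : ℤ) (h : ¬(i = n + 1 ∧ j = n)) : hh K n Xo Yo Zo Wo en en1 i j = 0 := by
  unfold hh; rw [dif_neg h]

lemma hc_n :
    ff K n Xo Yo Zo Wo en en1 n ≫ gf K n Xo Yo Zo Wo en en1 n =
      K.d n (n + 1) ≫ hh K n Xo Yo Zo Wo en en1 (n + 1) n +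
        hh K n Xo Yo Zo Wo en en1 n (n - 1) ≫ K.d (n - 1) n + 𝟙 (K.X n) := by
  rw [ff_at_n, gf_at_n, hh_val, hh_zero K n Xo Yo Zo Wo en en1 n (n - 1) (by omega)]
  simp only [Category.assoc, eqToHom_trans_assoc, eqToHom_refl, Category.id_comp,
    zero_comp, add_zero]
  rw [← cancel_epi en.inv]
  apply biprod.hom_ext'
  · simp only [biprod.lift_eq, Preadditive.comp_add, Preadditive.add_comp,
      Preadditive.comp_neg, Preadditive.neg_comp, Category.assoc,
      Iso.inv_hom_id_assoc, biprod.inl_fst_assoc, Category.id_comp, Category.comp_id,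
      biprod.inl_snd_assoc, zero_comp, comp_zero]
    abel
  · simp only [biprod.lift_eq, Preadditive.comp_add, Preadditive.add_comp,
      Preadditive.comp_neg, Preadditive.neg_comp, Category.assoc,
      Iso.inv_hom_id_assoc, biprod.inr_fst_assoc, Category.id_comp, Category.comp_id,
      biprod.inr_snd_assoc, zero_comp, comp_zero, c1']
    abel

lemma hc_n1 :
    ff K n Xo Yo Zo Wo en en1 (n + 1) ≫ gf K n Xo Yo Zo Wo en en1 (n + 1) =
      K.d (n + 1) (n + 1 + 1) ≫ hh K n Xo Yo Zo Wo en en1 (n + 1 + 1) (n + 1) +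
        hh K n Xo Yo Zo Wo en en1 (n + 1) n ≫ K.d n (n + 1) + 𝟙 (K.X (n + 1)) := by
  rw [ff_at_n1, gf_at_n1, hh_val,
    hh_zero K n Xo Yo Zo Wo en en1 (n + 1 + 1) (n + 1) (by omega)]
  simp only [Category.assoc, eqToHom_trans_assoc, eqToHom_refl, Category.id_comp,
    comp_zero, zero_add]
  rw [← cancel_epi en1.inv]
  apply biprod.hom_ext'
  · simp [biprod.desc_eq, Preadditive.comp_add, Preadditive.add_comp]
  · simp only [biprod.desc_eq, Preadditive.comp_add, Preadditive.add_comp,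
      Preadditive.comp_neg, Preadditive.neg_comp, Category.assoc,
      Iso.inv_hom_id_assoc, biprod.inr_fst_assoc, zero_comp, comp_zero,
      biprod.inr_snd_assoc, Category.id_comp, zero_add, Category.comp_id]
    rw [← cancel_mono en1.hom]
    simp only [Category.assoc, Iso.inv_hom_id, Category.comp_id,
      Preadditive.neg_comp, Preadditive.add_comp]
    apply biprod.hom_ext
    · simp
    · simp

lemma hc_other (i : ℤ) (h0 : i ≠ n) (h2 : i ≠ n + 1) :
    ff K n Xo Yo Zo Wo en en1 i ≫ gf K n Xo Yo Zo Wo en en1 i =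
      K.d i (i + 1) ≫ hh K n Xo Yo Zo Wo en en1 (i + 1) i +
        hh K n Xo Yo Zo Wo en en1 i (i - 1) ≫ K.d (i - 1) i + 𝟙 (K.X i) := by
  rw [ff_other K n Xo Yo Zo Wo en en1 i h0 h2, gf_other K n Xo Yo Zo Wo en en1 i h0 h2,
    hh_zero K n Xo Yo Zo Wo en en1 (i + 1) i (by omega),
    hh_zero K n Xo Yo Zo Wo en en1 i (i - 1) (by omega)]
  simp

def theHomotopy :
    Homotopy (fHom K n Xo Yo Zo Wo en en1 ≫ gHom K n Xo Yo Zo Wo en en1) (𝟙 K) where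
  hom := hh K n Xo Yo Zo Wo en en1
  zero i j w := by
    refine hh_zero K n Xo Yo Zo Wo en en1 i j ?_
    rintro ⟨rfl, rfl⟩
    exact w rfl
  comm i := by
    have hrel : (ComplexShape.up ℤ).Rel i (i + 1) := rfl
    rw [dNext_eq _ hrel]
    by_cases h2 : i = n + 1
    · subst h2
      have hrel' : (ComplexShape.up ℤ).Rel n (n + 1) := rfl
      rw [prevD_eq _ hrel']
      simpa [fHom, gHom] using hc_n1 K n Xo Yo Zo Wo en en1
    · have hrel' : (ComplexShape.up ℤ).Rel (i - 1) i := by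
        simp only [ComplexShape.up_Rel]; omega
      rw [prevD_eq _ hrel']
      by_cases h0 : i = n
      · subst h0
        simpa [fHom, gHom] using hc_n K i Xo Yo Zo Wo en en1
      · simpa [fHom, gHom] using hc_other K n Xo Yo Zo Wo en en1 i h0 h2

def theEquiv : HomotopyEquiv K (theK' K n Xo Yo Zo Wo en en1) where
  hom := fHom K n Xo Yo Zo Wo en en1
  inv := gHom K n Xo Yo Zo Wo en en1
  homotopyHomInvId := theHomotopy K n Xo Yo Zo Wo en en1
  homotopyInvHomId := Homotopy.ofEq (by
    ext i
    simpa [fHom, gHom] using gf_ff K n Xo Yo Zo Wo en en1 i)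

lemma d_eqToHom (L : CochainComplex C ℤ) {i j j' : ℤ} (h : j = j') :
    L.d i j ≫ eqToHom (congrArg L.X h) = L.d i j' := by
  subst h; simp

end

end GaussAux

open GaussAux

/-- Gaussian elimination (Lemma 6.2): if `X^n ≅ X ⊞ Y`, `X^{n+1} ≅ Z ⊞ W` and the component
`D : Y ⟶ W` of the differential is an isomorphism, then the complex is homotopy equivalent to
the complex with `X` and `Z` in degrees `n`, `n+1`, differential `A - B ∘ D⁻¹ ∘ C'` between
them, differentials `π_X ∘ u` and `v ∘ ι_Z` into and out of these degrees, and all other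
terms and differentials unchanged. -/
theorem gaussian_elimination
    {C : Type*} [Category C] [Preadditive C] [HasBinaryBiproducts C]
    (K : CochainComplex C ℤ) (n : ℤ)
    (Xo Yo Zo Wo : C)
    (en : K.X n ≅ Xo ⊞ Yo) (en1 : K.X (n + 1) ≅ Zo ⊞ Wo)
    [IsIso (biprod.inr ≫ en.inv ≫ K.d n (n + 1) ≫ en1.hom ≫ biprod.snd)] :
    ∃ (K' : CochainComplex C ℤ)
      (eo : ∀ i : ℤ, i ≠ n → i ≠ n + 1 → (K'.X i ≅ K.X i))
      (e0 : K'.X n ≅ Xo) (e1 : K'.X (n + 1) ≅ Zo),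
      Nonempty (HomotopyEquiv K K') ∧
      (∀ (i : ℤ) (h1 : i ≠ n) (h2 : i ≠ n + 1) (h3 : i + 1 ≠ n) (h4 : i + 1 ≠ n + 1),
        K'.d i (i + 1) ≫ (eo (i + 1) h3 h4).hom = (eo i h1 h2).hom ≫ K.d i (i + 1)) ∧
      (K'.d (n - 1) n ≫ e0.hom =
        (eo (n - 1) (by omega) (by omega)).hom ≫ K.d (n - 1) n ≫ en.hom ≫ biprod.fst) ∧
      (K'.d n (n + 1) ≫ e1.hom =
        e0.hom ≫
          (biprod.inl ≫ en.inv ≫ K.d n (n + 1) ≫ en1.hom ≫ biprod.fst -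
            (biprod.inl ≫ en.inv ≫ K.d n (n + 1) ≫ en1.hom ≫ biprod.snd) ≫
              inv (biprod.inr ≫ en.inv ≫ K.d n (n + 1) ≫ en1.hom ≫ biprod.snd) ≫
              (biprod.inr ≫ en.inv ≫ K.d n (n + 1) ≫ en1.hom ≫ biprod.fst))) ∧
      (K'.d (n + 1) (n + 2) ≫ (eo (n + 2) (by omega) (by omega)).hom =
        e1.hom ≫ biprod.inl ≫ en1.inv ≫ K.d (n + 1) (n + 2)) := by
  refine ⟨theK' K n Xo Yo Zo Wo en en1,
    fun i h1 h2 => eqToIso (obj_at K n Xo Zo i h1 h2),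
    eqToIso (obj_at_n K n Xo Zo), eqToIso (obj_at_n1 K n Xo Zo),
    ⟨theEquiv K n Xo Yo Zo Wo en en1⟩, ?_, ?_, ?_, ?_⟩
  · intro i h1 h2 h3 h4
    rw [theK'_d K n Xo Yo Zo Wo en en1 i (i + 1) rfl,
      dd_other K n Xo Yo Zo Wo en en1 i h1 h3 h2]
    simp
  · rw [theK'_d K n Xo Yo Zo Wo en en1 (n - 1) n (by omega),
      dd_into K n Xo Yo Zo Wo en en1 (n - 1) (by omega)]
    simp
  · rw [theK'_d K n Xo Yo Zo Wo en en1 n (n + 1) rfl, dd_at_n]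
    simp [dm, Dinv]
  · rw [theK'_d K n Xo Yo Zo Wo en en1 (n + 1) (n + 2) (by omega), dd_at_n1]
    simp only [Category.assoc, eqToIso.hom, eqToHom_trans, eqToHom_trans_assoc,
      eqToHom_refl, Category.id_comp, Category.comp_id]
    rw [d_eqToHom K (show n + 1 + 1 = n + 2 by omega)]
end
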